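/- Let σ be an l-simplex in ℝ^n with ordered vertices v₀ < ⋯ < v_l, and define σ[i] ⊆ σ × [0,1] as the convex hull of {(v_j,0) : j ≤ i} ∪ {(v_j,1) : j ≥ i}. Then σ × [0,1] = ⋃_{i=0}^{l} σ[i]. -/

import Mathlib

/-- Prism decomposition: for an `l`-simplex `σ = convexHull {v 0, …, v l}` in `ℝ^n`,
the prism `σ × [0,1]` is the union of the simplices
`σ[i] = convexHull ({(v j, 0) : j ≤ i} ∪ {(v j, 1) : j ≥ i})` for `0 ≤ i ≤ l`. -/
theorem stmt9 (n l : ℕ) (v : Fin (l + 1) → (Fin n → ℝ)) (hv : AffineIndependent ℝ v) :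
    (convexHull ℝ (Set.range v)) ×ˢ (Set.Icc (0 : ℝ) 1) =
      ⋃ i : Fin (l + 1),
        convexHull ℝ
          ((fun j : Fin (l + 1) => ((v j, (0 : ℝ)) : (Fin n → ℝ) × ℝ)) ''
              {j | (j : ℕ) ≤ (i : ℕ)} ∪
            (fun j : Fin (l + 1) => ((v j, (1 : ℝ)) : (Fin n → ℝ) × ℝ)) ''
              {j | (i : ℕ) ≤ (j : ℕ)}) := by
  classical
  apply Set.Subset.antisymm
  · rintro ⟨x, t⟩ ⟨hx, ht0, ht1⟩
    simp only [Set.mem_Icc] at *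
    rw [convexHull_range_eq_exists_affineCombination] at hx
    obtain ⟨s, w, hw0, hw1, hx⟩ := hx
    set c : Fin (l+1) → ℝ := fun j => if j ∈ s then w j else 0 with hcdef
    have hc0 : ∀ j, 0 ≤ c j := fun j => by
      by_cases h : j ∈ s <;> simp [hcdef, h, hw0 j]
    have hc1 : ∑ j, c j = 1 := by
      rw [← hw1]
      simp [hcdef, Finset.sum_ite_mem]
    have hcx : ∑ j, c j • v j = x := by
      rw [← hx, Finset.affineCombination_eq_linear_combination s v w hw1]
      rw [show (∑ j, c j • v j) = ∑ j, (if j ∈ s then w j • v j else 0) by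
        refine Finset.sum_congr rfl fun j _ => ?_
        by_cases h : j ∈ s <;> simp [hcdef, h]]
      simp [Finset.sum_ite_mem]
    set T : ℕ → ℝ := fun k => ∑ j ∈ Finset.univ.filter (fun j : Fin (l+1) => k ≤ (j:ℕ)), c j
      with hTdef
    have hT0 : T 0 = 1 := by
      rw [hTdef]; simp [hc1]
    have hTtop : T (l+1) = 0 := by
      rw [hTdef]
      have : Finset.univ.filter (fun j : Fin (l+1) => l+1 ≤ (j:ℕ)) = ∅ := by
        ext j
        simp only [Finset.mem_filter, Finset.mem_univ, true_and, Finset.notMem_empty, iff_false]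
        omega
      simp only [this, Finset.sum_empty]
    have hTstep : ∀ k (hk : k ≤ l), T k = c ⟨k, by omega⟩ + T (k+1) := by
      intro k hk
      have hins : Finset.univ.filter (fun j : Fin (l+1) => k ≤ (j:ℕ))
          = insert (⟨k, by omega⟩ : Fin (l+1))
            (Finset.univ.filter (fun j : Fin (l+1) => k+1 ≤ (j:ℕ))) := by
        ext j; simp [Fin.ext_iff]; omega
      rw [hTdef]
      simp only [hins]
      rw [Finset.sum_insert (by simp)]
    set P : ℕ → Prop := fun k => t ≤ T k with hPdef
    set i : ℕ := Nat.findGreatest P l with hidef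
    have hil : i ≤ l := Nat.findGreatest_le l
    have hP0 : P 0 := by rw [hPdef]; simp only; rw [hT0]; exact ht1
    have hPi : t ≤ T i := Nat.findGreatest_spec (Nat.zero_le l) hP0
    have hPi1 : T (i+1) ≤ t := by
      rcases Nat.lt_or_ge i l with h | h
      · have := Nat.findGreatest_is_greatest (lt_add_one i) (by omega : i + 1 ≤ l)
        exact le_of_not_ge (by simpa [hPdef] using this)
      · have : i = l := le_antisymm hil h
        rw [this, hTtop]; exact ht0
    set i' : Fin (l+1) := ⟨i, by omega⟩ with hi'def
    set b : ℝ := t - T (i+1) with hbdef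
    have hb0 : 0 ≤ b := by rw [hbdef]; linarith
    have hbc : b ≤ c i' := by
      have := hTstep i hil
      rw [hbdef, hi'def]; linarith [hPi]
    refine Set.mem_iUnion.2 ⟨i', ?_⟩
    set W : Fin (l+1) ⊕ Unit → ℝ :=
      Sum.elim (fun j => if j = i' then c j - b else c j) (fun _ => b) with hWdef
    set Z : Fin (l+1) ⊕ Unit → (Fin n → ℝ) × ℝ :=
      Sum.elim (fun j => (v j, if (j:ℕ) ≤ i then (0:ℝ) else 1)) (fun _ => (v i', 1)) with hZdef
    have key : ∑ k, W k • Z k = ((x, t) : (Fin n → ℝ) × ℝ) := by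
      rw [Fintype.sum_sum_type]
      apply Prod.ext
      · simp only [Prod.fst_add, Prod.fst_sum, Prod.smul_fst, hWdef, hZdef, Sum.elim_inl,
          Sum.elim_inr]
        have h1 : ∑ j : Fin (l+1), (if j = i' then c j - b else c j) • v j
            = (∑ j : Fin (l+1), c j • v j) - b • v i' := by
          rw [show (∑ j : Fin (l+1), (if j = i' then c j - b else c j) • v j)
              = ∑ j : Fin (l+1), (c j • v j - if j = i' then b • v j else 0) by
            refine Finset.sum_congr rfl fun j _ => ?_
            split_ifs with h
            · rw [sub_smul]
            · rw [sub_zero]]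
          rw [Finset.sum_sub_distrib, Finset.sum_ite_eq' Finset.univ i' (fun j => b • v j)]
          simp
        simp only [h1, hcx]
        simp
      · simp only [Prod.snd_add, Prod.snd_sum, Prod.smul_snd, hWdef, hZdef, Sum.elim_inl,
          Sum.elim_inr, smul_eq_mul]
        have h1 : ∀ j : Fin (l+1),
            (if j = i' then c j - b else c j) * (if (j:ℕ) ≤ i then (0:ℝ) else 1)
            = if i + 1 ≤ (j:ℕ) then c j else 0 := by
          intro j
          have : j = i' ↔ (j:ℕ) = i := by rw [hi'def, Fin.ext_iff]
          simp only [this]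
          split_ifs <;> first | omega | simp
        rw [Finset.sum_congr rfl (fun j _ => h1 j), ← Finset.sum_filter]
        have hfold : (∑ j ∈ Finset.filter (fun j : Fin (l+1) => i + 1 ≤ (j:ℕ)) Finset.univ, c j)
            = T (i+1) := rfl
        rw [hfold, hbdef]
        simp only [Finset.univ_unique, Finset.sum_singleton]
        ring
    rw [← key]
    refine Convex.sum_mem (convex_convexHull ℝ _) (fun k _ => ?_) ?_ (fun k _ => ?_)
    · rcases k with j | u
      · simp only [hWdef, Sum.elim_inl]
        split_ifs with h
        · rw [h]; linarith [hbc]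
        · exact hc0 j
      · simpa [hWdef] using hb0
    · rw [Fintype.sum_sum_type]
      simp only [hWdef, Sum.elim_inl, Sum.elim_inr]
      rw [show (∑ j : Fin (l+1), if j = i' then c j - b else c j)
          = ∑ j : Fin (l+1), (c j - if j = i' then b else 0) by
        refine Finset.sum_congr rfl fun j _ => ?_
        split_ifs <;> ring]
      rw [Finset.sum_sub_distrib, Finset.sum_ite_eq' Finset.univ i' (fun _ => b)]
      simp [hc1]
    · apply subset_convexHull
      rcases k with j | u
      · simp only [hZdef, Sum.elim_inl]
        by_cases h : (j:ℕ) ≤ i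
        · exact Or.inl ⟨j, h, by simp [h]⟩
        · refine Or.inr ⟨j, ?_, by simp [h]⟩
          show (i' : ℕ) ≤ (j : ℕ)
          simp only [hi'def, Fin.val_mk]
          omega
      · exact Or.inr ⟨i', Nat.le_refl _, rfl⟩
  · refine Set.iUnion_subset fun i => convexHull_min ?_
      ((convex_convexHull ℝ _).prod (convex_Icc 0 1))
    rintro p (⟨j, hj, rfl⟩ | ⟨j, hj, rfl⟩)
    · exact ⟨subset_convexHull ℝ _ ⟨j, rfl⟩, by norm_num⟩
    · exact ⟨subset_convexHull ℝ _ ⟨j, rfl⟩, by norm_num⟩
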